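/- (Recursion convergence for the recurrence protocol) Define for sequences (ε_n), (τ_n) of reals in [0,1): P_n = 2ε_n² + 5ε_n⁴, Z_n = (1+τ_n⁴)/(1−τ_n⁴), Δ_n = 2Z_nP_n/(1−2Z_nP_n), and suppose the update inequalities τ_{n+2} ≤ τ_n⁴(1+3Δ_n) + ((1+Δ_n)/(1−Δ_n))(3Δ_n + P_n) and ε_{n+2} ≤ 4((1+Δ_n)/(1−Δ_n))(ε_n² + ε_n⁴) hold. If ε₀ ≤ (1/7)·(1−τ₀⁴)/(1+τ₀⁴), then the invariant Z_n ε_n ≤ 1/7 is maintained for all even n, ε_{n+2} ≤ 5ε_n², and consequently ε_n ≤ (1/5)(5ε₀)^{2^{n/2}} → 0 and τ_n → 0. -/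

import Mathlib

noncomputable section

open Matrix ComplexOrder

abbrev Mat (d : ℕ) := Matrix (Fin d) (Fin d) ℂ

variable {d : ℕ}

/-- The square root `Matrix.PosSemidef.sqrt` of the older Mathlib, spelled out. -/
noncomputable def psdSqrt {A : Mat d} (hA : A.PosSemidef) : Mat d :=
  hA.1.eigenvectorUnitary.1 * diagonal ((↑) ∘ (√·) ∘ hA.1.eigenvalues) *
    (star hA.1.eigenvectorUnitary : Mat d)

theorem psdSqrt_isHermitian {A : Mat d} (hA : A.PosSemidef) : (psdSqrt hA).IsHermitian := by
  unfold psdSqrt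
  rw [Matrix.star_eq_conjTranspose]
  exact Matrix.isHermitian_mul_mul_conjTranspose _
    (Matrix.isHermitian_diagonal_of_self_adjoint _ (by ext i; simp [Pi.star_apply]))

/-- Singular values of a matrix: eigenvalues of `sqrt (ρᴴ * ρ)`. -/
noncomputable def singVals (ρ : Mat d) : Fin d → ℝ :=
  (psdSqrt_isHermitian (Matrix.posSemidef_conjTranspose_mul_self ρ)).eigenvalues

/-- Schatten `p`-norm. -/
noncomputable def schattenNorm (p : ℝ) (ρ : Mat d) : ℝ :=
  (∑ i, singVals ρ i ^ p) ^ (1 / p)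

/-- Trace norm (Schatten 1-norm). -/
noncomputable def traceNorm (ρ : Mat d) : ℝ := schattenNorm 1 ρ

/-- Operator norm (largest singular value). -/
noncomputable def opNorm (ρ : Mat d) : ℝ := ⨆ i, singVals ρ i

/-- Induced `a → b` Schatten norm of a linear map on matrices. -/
noncomputable def inducedNorm (a b : ℝ) (F : Mat d →ₗ[ℂ] Mat d) : ℝ :=
  sSup {r : ℝ | ∃ σ : Mat d, σ ≠ 0 ∧ r = schattenNorm a (F σ) / schattenNorm b σ}

/-- Induced 1→1 norm, maximised over Hermitian matrices. -/
noncomputable def norm11 (F : Mat d →ₗ[ℂ] Mat d) : ℝ :=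
  sSup {r : ℝ | ∃ σ : Mat d, σ.IsHermitian ∧ σ ≠ 0 ∧ r = traceNorm (F σ) / traceNorm σ}

/-- Ergodicity coefficient. -/
noncomputable def ergCoeff (F : Mat d →ₗ[ℂ] Mat d) : ℝ :=
  sSup {r : ℝ | ∃ σ : Mat d, σ.IsHermitian ∧ σ.trace = 0 ∧ σ ≠ 0 ∧
    r = traceNorm (F σ) / traceNorm σ}

/-- A positive map sends positive semidefinite matrices to positive semidefinite matrices. -/
def IsPositiveMap (F : Mat d →ₗ[ℂ] Mat d) : Prop :=
  ∀ σ : Mat d, σ.PosSemidef → (F σ).PosSemidef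

def IsTracePreserving (F : Mat d →ₗ[ℂ] Mat d) : Prop :=
  ∀ σ : Mat d, (F σ).trace = σ.trace

/-- Ampliation `F ⊗ id_n` acting blockwise. -/
def ampliate (F : Mat d →ₗ[ℂ] Mat d) (n : ℕ)
    (M : Matrix (Fin d × Fin n) (Fin d × Fin n) ℂ) : Matrix (Fin d × Fin n) (Fin d × Fin n) ℂ :=
  Matrix.of fun p q => F (Matrix.of fun i j => M (i, p.2) (j, q.2)) p.1 q.1

def IsCompletelyPositive (F : Mat d →ₗ[ℂ] Mat d) : Prop :=
  ∀ (n : ℕ) (M : Matrix (Fin d × Fin n) (Fin d × Fin n) ℂ),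
    M.PosSemidef → (ampliate F n M).PosSemidef

/-- The conjugation map `ρ ↦ s * ρ * s`. -/
noncomputable def conjMap (s : Mat d) : Mat d →ₗ[ℂ] Mat d where
  toFun ρ := s * ρ * s
  map_add' x y := by simp [Matrix.mul_add, Matrix.add_mul]
  map_smul' c x := by simp [Matrix.mul_smul, Matrix.smul_mul]

/-- The projection onto the stationary state: `σ ↦ Tr(σ) • ρ∞`. -/
noncomputable def statProj (ρinf : Mat d) : Mat d →ₗ[ℂ] Mat d where
  toFun σ := σ.trace • ρinf
  map_add' x y := by simp [Matrix.trace_add, add_smul]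
  map_smul' c x := by simp [Matrix.trace_smul, smul_smul]

/-- `F` has spectral radius one. -/
def HasSpectralRadiusOne (F : Mat d →ₗ[ℂ] Mat d) : Prop :=
  IsGreatest {r : ℝ | ∃ μ ∈ spectrum ℂ (F : Module.End ℂ (Mat d)), r = ‖μ‖} 1

end

set_option maxHeartbeats 4000000 in

lemma rr_step (e t e' t' P Z Δ : ℝ)
    (he0 : 0 ≤ e) (ht0 : 0 ≤ t) (ht1 : t < 1)
    (he'0 : 0 ≤ e') (ht'0 : 0 ≤ t') (ht'1 : t' < 1)
    (hP : P = 2 * e ^ 2 + 5 * e ^ 4)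
    (hZ : Z = (1 + t ^ 4) / (1 - t ^ 4))
    (hΔ : Δ = 2 * Z * P / (1 - 2 * Z * P))
    (hτrec : t' ≤ t ^ 4 * (1 + 3 * Δ) + (1 + Δ) / (1 - Δ) * (3 * Δ + P))
    (hεrec : e' ≤ 4 * ((1 + Δ) / (1 - Δ)) * (e ^ 2 + e ^ 4))
    (hinv : Z * e ≤ 1 / 7) :
    e ≤ 1 / 7 ∧ e' ≤ 5 * e ^ 2 ∧ (1 + t' ^ 4) / (1 - t' ^ 4) * e' ≤ 1 / 7 ∧
    1 - t ^ 4 - (24 / 5) * e ≤ 1 - t' ^ 4 ∧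
    t' ≤ (9 / 7) * t ^ 4 + (14 / 5) * e ∧
    (1 / 2 ≤ t' → (15 / 8) * (1 - t ^ 4 - (24 / 5) * e) ≤ 1 - t' ^ 4) ∧
    7 * e ≤ 1 - t ^ 4 := by
  have ht4 : 0 ≤ t ^ 4 := by positivity
  have ht4' : t ^ 4 < 1 := by
    have := pow_lt_one₀ ht0 ht1 (by norm_num : 4 ≠ 0); linarith
  have hu : 0 < 1 - t ^ 4 := by linarith
  have hZ1 : 1 ≤ Z := by
    rw [hZ]; rw [le_div_iff₀ hu]; linarith
  have he7 : e ≤ 1 / 7 := by nlinarith [mul_le_mul_of_nonneg_right hZ1 he0]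
  have hP0 : 0 ≤ P := by rw [hP]; positivity
  have hZPval : Z * P = (Z * e) * (2 * e + 5 * e ^ 3) := by rw [hP]; ring
  have hfac0 : 0 ≤ 2 * e + 5 * e ^ 3 := by positivity
  have hZP0 : 0 ≤ Z * P := mul_nonneg (by linarith) hP0
  have hZPle : Z * P ≤ (103 / 343) * e := by
    rw [hZPval]
    have h1 : (Z * e) * (2 * e + 5 * e ^ 3) ≤ (1/7) * (2 * e + 5 * e ^ 3) :=
      mul_le_mul_of_nonneg_right hinv hfac0
    nlinarith [sq_nonneg e, mul_nonneg he0 he0]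
  have hZPle' : Z * P ≤ 103 / 2401 := by nlinarith
  have hden : (2195 : ℝ) / 2401 ≤ 1 - 2 * Z * P := by nlinarith
  have hdenpos : (0:ℝ) < 1 - 2 * Z * P := by linarith
  have hΔ0 : 0 ≤ Δ := by rw [hΔ]; exact div_nonneg (by linarith) (le_of_lt hdenpos)
  have hΔle : Δ ≤ (2 / 3) * e := by
    rw [hΔ, div_le_iff₀ hdenpos]
    nlinarith [mul_nonneg he0 hZP0, mul_le_mul_of_nonneg_left hZPle' he0]
  have hΔs : Δ ≤ 2 / 21 := by linarith
  have hdΔ : (0:ℝ) < 1 - Δ := by linarith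
  have hR : (1 + Δ) / (1 - Δ) ≤ 1 + (28 / 19) * e := by
    rw [div_le_iff₀ hdΔ]
    nlinarith [mul_le_mul_of_nonneg_left hΔle he0, mul_le_mul_of_nonneg_left he7 he0]
  have hR1 : 1 ≤ (1 + Δ) / (1 - Δ) := by
    rw [le_div_iff₀ hdΔ]; linarith
  have hR0 : 0 ≤ (1 + Δ) / (1 - Δ) := by linarith
  have hR23 : (1 + Δ) / (1 - Δ) ≤ 23 / 19 := by nlinarith
  have he'5 : e' ≤ 5 * e ^ 2 := by
    have h1 : e' ≤ 4 * (1 + (28/19) * e) * (e ^ 2 + e ^ 4) := by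
      calc e' ≤ 4 * ((1 + Δ) / (1 - Δ)) * (e ^ 2 + e ^ 4) := hεrec
        _ ≤ 4 * (1 + (28/19) * e) * (e ^ 2 + e ^ 4) := by
            apply mul_le_mul_of_nonneg_right _ (by positivity)
            linarith
    nlinarith [mul_nonneg (mul_nonneg he0 he0) (sub_nonneg.2 he7),
      mul_nonneg (mul_nonneg (mul_nonneg he0 he0) he0) (sub_nonneg.2 he7),
      mul_nonneg (mul_nonneg (mul_nonneg (mul_nonneg he0 he0) he0) he0) (sub_nonneg.2 he7),
      sq_nonneg e]
  have h3ΔP : 3 * Δ + P ≤ 2 * e + (103/49) * e ^ 2 := by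
    rw [hP]; nlinarith [mul_nonneg (mul_nonneg he0 he0) (sub_nonneg.2 he7), sq_nonneg e]
  have h3ΔP0 : 0 ≤ 3 * Δ + P := by linarith
  have hRterm : (1 + Δ) / (1 - Δ) * (3 * Δ + P) ≤ (14 / 5) * e := by
    have := mul_le_mul_of_nonneg_right hR23 h3ΔP0
    nlinarith [mul_nonneg (mul_nonneg he0 he0) (sub_nonneg.2 he7), sq_nonneg e]
  have hE : t' ≤ (9 / 7) * t ^ 4 + (14 / 5) * e := by
    have h1 : t ^ 4 * (1 + 3 * Δ) ≤ (9/7) * t ^ 4 := by nlinarith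
    linarith
  have hD' : t' ≤ t ^ 4 + (24 / 5) * e := by
    have h1 : t ^ 4 * (1 + 3 * Δ) ≤ t ^ 4 + 2 * e := by nlinarith
    linarith
  have ht'4 : t' ^ 4 ≤ t' := by
    calc t' ^ 4 ≤ t' ^ 1 := pow_le_pow_of_le_one ht'0 (le_of_lt ht'1) (by norm_num)
      _ = t' := pow_one t'
  have hD : 1 - t ^ 4 - (24 / 5) * e ≤ 1 - t' ^ 4 := by linarith
  have hF : 1 / 2 ≤ t' → (15 / 8) * (1 - t ^ 4 - (24 / 5) * e) ≤ 1 - t' ^ 4 := by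
    intro ht'h
    have h158 : (15/8) * (1 - t') ≤ 1 - t' ^ 4 := by
      nlinarith [mul_nonneg (sub_nonneg.2 (le_of_lt ht'1)) (sub_nonneg.2 ht'h),
        mul_nonneg (mul_nonneg (sub_nonneg.2 (le_of_lt ht'1)) (sub_nonneg.2 ht'h)) ht'0,
        mul_nonneg (mul_nonneg (mul_nonneg (sub_nonneg.2 (le_of_lt ht'1)) (sub_nonneg.2 ht'h)) ht'0) ht'0]
    nlinarith
  have hinv4 : 7 * ((1 + t ^ 4) * e) ≤ 1 - t ^ 4 := by
    have h1 : (1 + t ^ 4) * e / (1 - t ^ 4) ≤ 1 / 7 := by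
      rw [hZ] at hinv; rw [div_mul_eq_mul_div] at hinv; exact hinv
    rw [div_le_iff₀ hu] at h1; linarith
  have hinv7 : 7 * e ≤ 1 - t ^ 4 := by nlinarith
  refine ⟨he7, he'5, ?_, hD, hE, hF, hinv7⟩
  -- main goal: Z' e' ≤ 1/7
  clear hP hZ hΔ hτrec hεrec hinv hP0 hZPval hfac0 hZP0 hZPle hZPle' hden hdenpos
  clear hΔ0 hΔle hΔs hdΔ hR hR1 hR0 hR23 h3ΔP h3ΔP0 hRterm hF hD
  clear hZ1 ht'4 Z P Δ
  have ht'4pos : 0 ≤ t' ^ 4 := by positivity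
  have ht'4lt : t' ^ 4 < 1 := by
    have := pow_lt_one₀ ht'0 ht'1 (by norm_num : 4 ≠ 0); linarith
  have hu' : 0 < 1 - t' ^ 4 := by linarith
  rw [div_mul_eq_mul_div, div_le_iff₀ hu']
  by_cases hc : t' ≤ 1 / 2
  · have ht'16 : t' ^ 4 ≤ 1 / 16 := by
      have := pow_le_pow_left₀ ht'0 hc 4
      norm_num at this; linarith
    nlinarith [mul_nonneg ht'4pos he'0, sq_nonneg e, mul_le_mul_of_nonneg_left he7 he0]
  · push_neg at hc
    have htc : 1 / 2 ≤ t := by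
      by_contra hct
      push_neg at hct
      have h16 : t ^ 4 ≤ 1 / 16 := by
        have := pow_le_pow_left₀ ht0 (le_of_lt hct) 4
        norm_num at this; linarith
      linarith
    have ht16 : 1 / 16 ≤ t ^ 4 := by
      have := pow_le_pow_left₀ (by norm_num : (0:ℝ) ≤ 1/2) htc 4
      norm_num at this; linarith
    have hu15 : 1 - t ^ 4 ≤ 15 / 16 := by linarith
    have hukey : (119 / 16) * e ≤ 1 - t ^ 4 := by
      nlinarith [mul_nonneg (by linarith : (0:ℝ) ≤ t ^ 4 - 1/16) he0]
    have hekey : e ≤ 15 / 119 := by linarith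
    have key1 : (211 / 80) * e ≤ 1 - t' := by linarith [hD']
    have key2 : (119 / 6) * e ^ 2 ≤ 1 - t' := by
      nlinarith [mul_nonneg (by linarith : (0:ℝ) ≤ 15/119 - e) he0]
    have hcube : t' ^ 3 ≤ t' := by
      calc t' ^ 3 ≤ t' ^ 1 := pow_le_pow_of_le_one ht'0 (le_of_lt ht'1) (by norm_num)
        _ = t' := pow_one t'
    have hcpos : (0:ℝ) ≤ 13 + 9 * t' + t' ^ 2 - 15 * t' ^ 3 := by nlinarith [sq_nonneg t']
    have poly17 : 30 * ((1 + t' ^ 4) * (1 - t')) ≤ 17 * (1 - t' ^ 4) := by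
      nlinarith [mul_nonneg (mul_nonneg (sub_nonneg.2 (le_of_lt ht'1))
        (by linarith : (0:ℝ) ≤ 2 * t' - 1)) hcpos]
    have ha0 : (0:ℝ) < 1 + t' ^ 4 := by linarith
    have step1 : (1 + t' ^ 4) * ((119 / 6) * e ^ 2) ≤ (1 + t' ^ 4) * (1 - t') :=
      mul_le_mul_of_nonneg_left key2 (le_of_lt ha0)
    have step2 : (1 + t' ^ 4) * e' ≤ (1 + t' ^ 4) * (5 * e ^ 2) :=
      mul_le_mul_of_nonneg_left he'5 (le_of_lt ha0)
    nlinarith [mul_nonneg (le_of_lt ha0) (sq_nonneg e)]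

set_option maxHeartbeats 1000000 in
/-- STATEMENT 18: convergence of the coupled recursion of the recurrence protocol. -/
theorem recurrence_recursion (ε τ : ℕ → ℝ)
    (hε : ∀ n, 0 ≤ ε n ∧ ε n < 1) (hτ : ∀ n, 0 ≤ τ n ∧ τ n < 1)
    (P Z Δ : ℕ → ℝ)
    (hP : ∀ n, P n = 2 * ε n ^ 2 + 5 * ε n ^ 4)
    (hZ : ∀ n, Z n = (1 + τ n ^ 4) / (1 - τ n ^ 4))
    (hΔ : ∀ n, Δ n = 2 * Z n * P n / (1 - 2 * Z n * P n))
    (hτrec : ∀ n, τ (n + 2) ≤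
      τ n ^ 4 * (1 + 3 * Δ n) + (1 + Δ n) / (1 - Δ n) * (3 * Δ n + P n))
    (hεrec : ∀ n, ε (n + 2) ≤ 4 * ((1 + Δ n) / (1 - Δ n)) * (ε n ^ 2 + ε n ^ 4))
    (h0 : ε 0 ≤ (1 / 7) * (1 - τ 0 ^ 4) / (1 + τ 0 ^ 4)) :
    (∀ k, Z (2 * k) * ε (2 * k) ≤ 1 / 7) ∧
    (∀ k, ε (2 * k + 2) ≤ 5 * ε (2 * k) ^ 2) ∧
    (∀ k, ε (2 * k) ≤ (1 / 5) * (5 * ε 0) ^ (2 ^ k)) ∧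
    Filter.Tendsto (fun k => ε (2 * k)) Filter.atTop (nhds 0) ∧
    Filter.Tendsto (fun k => τ (2 * k)) Filter.atTop (nhds 0) := by
  have hτ4pos : ∀ n, (0:ℝ) ≤ τ n ^ 4 := fun n => by positivity
  have hτ4lt : ∀ n, τ n ^ 4 < 1 := fun n => by
    have := pow_lt_one₀ (hτ n).1 (hτ n).2 (by norm_num : 4 ≠ 0); linarith
  have hu : ∀ n, (0:ℝ) < 1 - τ n ^ 4 := fun n => by linarith [hτ4lt n]
  have hu1 : ∀ n, 1 - τ n ^ 4 ≤ 1 := fun n => by linarith [hτ4pos n]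
  -- base case of the invariant
  have hbase : Z 0 * ε 0 ≤ 1 / 7 := by
    have hZ0 : 0 < Z 0 := by rw [hZ 0]; exact div_pos (by linarith [hτ4pos 0]) (hu 0)
    have h1 : Z 0 * ε 0 ≤ Z 0 * ((1/7) * (1 - τ 0 ^ 4) / (1 + τ 0 ^ 4)) :=
      mul_le_mul_of_nonneg_left h0 (le_of_lt hZ0)
    have h2 : Z 0 * ((1/7) * (1 - τ 0 ^ 4) / (1 + τ 0 ^ 4)) = 1/7 := by
      rw [hZ 0]
      have e1 : (1 - τ 0 ^ 4) ≠ 0 := ne_of_gt (hu 0)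
      have e2 : (1 + τ 0 ^ 4) ≠ 0 := by positivity
      field_simp
    linarith
  -- the inductive step, via rr_step
  have hstep : ∀ k, Z (2*k) * ε (2*k) ≤ 1/7 →
      (ε (2*k) ≤ 1/7 ∧ ε (2*k+2) ≤ 5 * ε (2*k)^2 ∧ Z (2*k+2) * ε (2*k+2) ≤ 1/7 ∧
       1 - τ (2*k)^4 - (24/5)*ε (2*k) ≤ 1 - τ (2*k+2)^4 ∧
       τ (2*k+2) ≤ (9/7)*τ (2*k)^4 + (14/5)*ε (2*k) ∧
       (1/2 ≤ τ (2*k+2) → (15/8)*(1 - τ (2*k)^4 - (24/5)*ε (2*k)) ≤ 1 - τ (2*k+2)^4) ∧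
       7 * ε (2*k) ≤ 1 - τ (2*k)^4) := by
    intro k hk
    have h := rr_step (ε (2*k)) (τ (2*k)) (ε (2*k+2)) (τ (2*k+2)) (P (2*k)) (Z (2*k)) (Δ (2*k))
      (hε _).1 (hτ _).1 (hτ _).2 (hε _).1 (hτ _).1 (hτ _).2 (hP _) (hZ _) (hΔ _)
      (hτrec (2*k)) (hεrec (2*k)) hk
    rw [hZ (2*k+2)]
    exact h
  have hinv : ∀ k, Z (2*k) * ε (2*k) ≤ 1/7 := by
    intro k
    induction k with
    | zero => simpa using hbase
    | succ n ih =>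
      have h := (hstep n ih).2.2.1
      have he : 2*(n+1) = 2*n+2 := by ring
      rw [he]; exact h
  have hfacts := fun k => hstep k (hinv k)
  have c2 : ∀ k, ε (2*k+2) ≤ 5 * ε (2*k)^2 := fun k => (hfacts k).2.1
  have hε0le : ε 0 ≤ 1/7 := by have := (hfacts 0).1; norm_num at this; exact this
  have c3 : ∀ k, ε (2*k) ≤ (1/5) * (5 * ε 0) ^ (2^k) := by
    intro k
    induction k with
    | zero => norm_num; linarith
    | succ n ih =>
      have hb0 : (0:ℝ) ≤ 5 * ε 0 := by linarith [(hε 0).1]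
      have h1 : ε (2*n)^2 ≤ ((1/5) * (5 * ε 0)^(2^n))^2 := pow_le_pow_left₀ (hε _).1 ih 2
      have h2 : ε (2*(n+1)) ≤ 5 * ε (2*n)^2 := by
        have he : 2*(n+1) = 2*n+2 := by ring
        rw [he]; exact c2 n
      calc ε (2*(n+1)) ≤ 5 * ε (2*n)^2 := h2
        _ ≤ 5 * ((1/5) * (5 * ε 0)^(2^n))^2 := by linarith
        _ = (1/5) * (5 * ε 0)^(2^(n+1)) := by
            rw [mul_pow, ← pow_mul, pow_succ]; ring
  -- tendsto of ε
  have hr0 : (0:ℝ) ≤ 5 * ε 0 := by linarith [(hε 0).1]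
  have hr1 : 5 * ε 0 < 1 := by linarith
  have hbnd : ∀ k, ε (2*k) ≤ (1/5) * (5 * ε 0)^k := by
    intro k
    have h1 : (5 * ε 0)^(2^k) ≤ (5 * ε 0)^k :=
      pow_le_pow_of_le_one hr0 (by linarith) (Nat.le_of_lt (Nat.lt_two_pow_self))
    have := c3 k
    linarith
  have c4 : Filter.Tendsto (fun k => ε (2 * k)) Filter.atTop (nhds 0) := by
    apply squeeze_zero (fun k => (hε _).1) hbnd
    have h := tendsto_pow_atTop_nhds_zero_of_lt_one hr0 hr1
    simpa using h.const_mul (1/5 : ℝ)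
  refine ⟨hinv, c2, c3, c4, ?_⟩
  -- tendsto of τ
  rw [Metric.tendsto_atTop]
  intro δ hδ
  by_cases hδ1 : 1 ≤ δ
  · exact ⟨0, fun k _ => by
      rw [Real.dist_eq, sub_zero, abs_of_nonneg (hτ _).1]
      exact lt_of_lt_of_le (hτ _).2 hδ1⟩
  push_neg at hδ1
  obtain ⟨K₀, hK₀⟩ := (Metric.tendsto_atTop.mp c4) (min (1/1000) (δ/12)) (by positivity)
  have hK₀' : ∀ k, K₀ ≤ k → ε (2*k) ≤ min (1/1000) (δ/12) := by
    intro k hk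
    have := hK₀ k hk
    rw [Real.dist_eq, sub_zero, abs_of_nonneg (hε _).1] at this
    exact le_of_lt this
  have hsmall : ∀ k, K₀ ≤ k → ε (2*k) ≤ 1/1000 :=
    fun k hk => (hK₀' k hk).trans (min_le_left _ _)
  have hsmallδ : ∀ k, K₀ ≤ k → ε (2*k) ≤ δ/12 :=
    fun k hk => (hK₀' k hk).trans (min_le_right _ _)
  -- ratio improvement lemma
  have hS : ∀ j, 7 * 2^j * ε (2*(K₀+j)) ≤ 1 - τ (2*(K₀+j))^4 := by
    intro j
    induction j with
    | zero => simpa using (hfacts K₀).2.2.2.2.2.2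
    | succ j ih =>
      have he : 2*(K₀+j+1) = 2*(K₀+j)+2 := by ring
      rw [show K₀ + (j+1) = K₀ + j + 1 from rfl, he]
      have hek : ε (2*(K₀+j)) ≤ 1/1000 := hsmall _ (by omega)
      have he0 : (0:ℝ) ≤ ε (2*(K₀+j)) := (hε _).1
      have he'0 : (0:ℝ) ≤ ε (2*(K₀+j)+2) := (hε _).1
      have h5 : ε (2*(K₀+j)+2) ≤ 5 * ε (2*(K₀+j))^2 := c2 _
      have he' : ε (2*(K₀+j)+2) ≤ ε (2*(K₀+j)) / 200 := by nlinarith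
      have hD : 1 - τ (2*(K₀+j))^4 - (24/5)*ε (2*(K₀+j)) ≤ 1 - τ (2*(K₀+j)+2)^4 :=
        (hfacts _).2.2.2.1
      have hc1 : (1:ℝ) ≤ 2^j := one_le_pow₀ (by norm_num)
      have h7e : 7 * ε (2*(K₀+j)) ≤ 1 - τ (2*(K₀+j))^4 := by
        nlinarith [mul_nonneg he0 (sub_nonneg.2 hc1)]
      have hu' : (11/35) * (1 - τ (2*(K₀+j))^4) ≤ 1 - τ (2*(K₀+j)+2)^4 := by linarith
      have hm : (2:ℝ)^j * ε (2*(K₀+j)+2) ≤ 2^j * (ε (2*(K₀+j)) / 200) :=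
        mul_le_mul_of_nonneg_left he' (by positivity)
      rw [pow_succ]
      nlinarith [hu (2*(K₀+j)), hu (2*(K₀+j)+2)]
  -- there is a later index where τ ≤ 1/2
  have hTex : ∃ m, K₀ ≤ m ∧ τ (2*m) ≤ 1/2 := by
    by_contra hcon
    push_neg at hcon
    set k₁ := K₀ + 4 with hk₁
    have hS4 : 112 * ε (2*k₁) ≤ 1 - τ (2*k₁)^4 := by
      have := hS 4; norm_num at this; exact this
    have hGrow : ∀ j, 100 * ε (2*(k₁+j)) ≤ 1 - τ (2*(k₁+j))^4 ∧
        (3/2:ℝ)^j * (1 - τ (2*k₁)^4) ≤ 1 - τ (2*(k₁+j))^4 := by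
      intro j
      induction j with
      | zero =>
        constructor
        · have := (hε (2*k₁)).1
          simpa using by linarith [hS4]
        · simp
      | succ j ih =>
        have hidx : 2*(k₁+(j+1)) = 2*(k₁+j)+2 := by ring
        rw [hidx]
        have he0 : (0:ℝ) ≤ ε (2*(k₁+j)) := (hε _).1
        have hek : ε (2*(k₁+j)) ≤ 1/1000 := hsmall _ (by omega)
        have h5 : ε (2*(k₁+j)+2) ≤ 5 * ε (2*(k₁+j))^2 := c2 _
        have he'0 : (0:ℝ) ≤ ε (2*(k₁+j)+2) := (hε _).1
        have hT' : 1/2 ≤ τ (2*(k₁+j)+2) := by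
          have := hcon (k₁+j+1) (by omega)
          have hidx2 : 2*(k₁+j+1) = 2*(k₁+j)+2 := by ring
          rw [hidx2] at this
          linarith
        have hF := (hfacts (k₁+j)).2.2.2.2.2.1 hT'
        have hupos := hu (2*(k₁+j))
        have hu'pos := hu (2*(k₁+j)+2)
        have hgr : (3/2) * (1 - τ (2*(k₁+j))^4) ≤ 1 - τ (2*(k₁+j)+2)^4 := by
          nlinarith [ih.1]
        constructor
        · nlinarith
        · rw [pow_succ]
          nlinarith [ih.2, hu 0]
    have hU₁pos := hu (2*k₁)
    obtain ⟨n, hn⟩ := pow_unbounded_of_one_lt ((1 - τ (2*k₁)^4)⁻¹) (by norm_num : (1:ℝ) < 3/2)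
    have h1 : 1 < (3/2:ℝ)^n * (1 - τ (2*k₁)^4) := by
      have h2 := mul_lt_mul_of_pos_right hn hU₁pos
      rwa [inv_mul_cancel₀ (ne_of_gt hU₁pos)] at h2
    have h3 := (hGrow n).2
    have h4 := hu1 (2*(k₁+n))
    linarith
  obtain ⟨m, hmK, hTm⟩ := hTex
  -- decay of τ below 1/2
  have hδ2 : (0:ℝ) < δ/2 := by linarith
  have hBnd : ∀ j, τ (2*(m+j)) ≤ 1/2 ∧ τ (2*(m+j)) ≤ (1/2:ℝ)^(j+1) + δ/2 := by
    intro j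
    induction j with
    | zero =>
      constructor
      · simpa using hTm
      · have : ((1:ℝ)/2)^(0+1) = 1/2 := by norm_num
        simpa using by linarith [hTm, hδ2]
    | succ j ih =>
      have hidx : 2*(m+(j+1)) = 2*(m+j)+2 := by ring
      rw [hidx]
      have ht0 : (0:ℝ) ≤ τ (2*(m+j)) := (hτ _).1
      have hrec := (hfacts (m+j)).2.2.2.2.1
      have hcube : τ (2*(m+j))^3 ≤ (1/2:ℝ)^3 := pow_le_pow_left₀ ht0 ih.1 3
      have ht4le : τ (2*(m+j))^4 ≤ (1/8) * τ (2*(m+j)) := by nlinarith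
      have heδ : ε (2*(m+j)) ≤ δ/12 := hsmallδ _ (by omega)
      have he0 : (0:ℝ) ≤ ε (2*(m+j)) := (hε _).1
      constructor
      · -- stays below 1/2
        have := ih.1
        nlinarith
      · have hb := ih.2
        rw [pow_succ]
        nlinarith
  obtain ⟨j₀, hj₀⟩ := exists_pow_lt_of_lt_one hδ2 (by norm_num : (1/2:ℝ) < 1)
  refine ⟨m + j₀, fun k hk => ?_⟩
  rw [Real.dist_eq, sub_zero, abs_of_nonneg (hτ _).1]
  have hkm : m ≤ k := by omega
  have hkeq : k = m + (k - m) := by omega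
  have hb := (hBnd (k - m)).2
  rw [← hkeq] at hb
  have hpow : ((1:ℝ)/2)^((k-m)+1) ≤ (1/2:ℝ)^j₀ := by
    apply pow_le_pow_of_le_one (by norm_num) (by norm_num)
    omega
  calc τ (2*k) ≤ (1/2:ℝ)^((k-m)+1) + δ/2 := hb
    _ ≤ (1/2:ℝ)^j₀ + δ/2 := by linarith
    _ < δ/2 + δ/2 := by linarith
    _ = δ := by ring
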